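/- Let (𝖩_n) be a sequence of integral convex polygons in ℝ² with p(𝖩_n)^{-1}𝖩_n → 𝖩_∞ in the Hausdorff metric, where 𝖩_∞ is a convex body with nonempty interior. Then liminf_n (minimum interior vertex angle of 𝖩_n) > 0. -/

import Mathlib

open Set MeasureTheory Metric Filter Topology Pointwise

/-- The lattice points of the plane. -/
def IsLatticePt (x : EuclideanSpace ℝ (Fin 2)) : Prop := ∀ i, ∃ n : ℤ, x i = (n : ℝ)

/-- Perimeter: the 1-dimensional Hausdorff measure of the boundary. -/
noncomputable def per (J : Set (EuclideanSpace ℝ (Fin 2))) : ℝ :=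
  (μH[1] (frontier J)).toReal

/-- The opening angle of the convex set `J` at a point `v`: the supremum of the angles
`∠ a v b` over points `a, b` of `J` distinct from `v`. -/
noncomputable def vertexAngle (J : Set (EuclideanSpace ℝ (Fin 2)))
    (v : EuclideanSpace ℝ (Fin 2)) : ℝ :=
  sSup {θ | ∃ a ∈ J, ∃ b ∈ J, a ≠ v ∧ b ≠ v ∧ θ = EuclideanGeometry.angle a v b}

/-- Minimum interior angle of a convex polygon: the infimum of the opening angles at
its vertices (extreme points). -/
noncomputable def minAngle (J : Set (EuclideanSpace ℝ (Fin 2))) : ℝ :=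
  sInf {θ | ∃ v ∈ Set.extremePoints ℝ J, θ = vertexAngle J v}

open scoped RealInnerProductSpace

lemma aux_ball_subset {K : Set (EuclideanSpace ℝ (Fin 2))}
    (hKconv : Convex ℝ K) (hKcl : IsClosed K) (hKne : K.Nonempty)
    {x : EuclideanSpace ℝ (Fin 2)} {r ε : ℝ} (hε : 0 < ε)
    (h : ∀ y ∈ closedBall x r, infDist y K ≤ ε) :
    closedBall x (r - 2*ε) ⊆ K := by
  intro y hy
  by_contra hyK
  obtain ⟨k, hkK, hk⟩ := exists_norm_eq_iInf_of_complete_convex hKne hKcl.isComplete hKconv y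
  have hvar := (norm_eq_iInf_iff_real_inner_le_zero hKconv hkK).mp hk
  have hyk : y - k ≠ 0 := sub_ne_zero.mpr (fun h' => hyK (h' ▸ hkK))
  set d := ‖y - k‖ with hd
  have hd0 : 0 < d := norm_pos_iff.mpr hyk
  set u : EuclideanSpace ℝ (Fin 2) := d⁻¹ • (y - k) with hu
  set z := y + (2*ε) • u with hz
  have hzy : dist z y = 2*ε := by
    rw [dist_eq_norm, hz]
    simp only [add_sub_cancel_left, norm_smul, hu, norm_smul, norm_norm]
    rw [Real.norm_eq_abs, Real.norm_eq_abs, abs_of_pos (by positivity : (0:ℝ) < 2*ε),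
      abs_of_pos (inv_pos.mpr hd0)]
    field_simp
    exact hd.symm
  have hzball : z ∈ closedBall x r := by
    rw [mem_closedBall] at hy ⊢
    calc dist z x ≤ dist z y + dist y x := dist_triangle _ _ _
    _ ≤ 2*ε + (r - 2*ε) := by linarith [hy]
    _ = r := by ring
  obtain ⟨p, hpK, hp⟩ : ∃ p ∈ K, dist z p < 2*ε :=
    (infDist_lt_iff hKne).mp (lt_of_le_of_lt (h z hzball) (by linarith))
  have hinner : (inner ℝ (y - k) (p - k) : ℝ) ≤ 0 := hvar p hpK
  have hcalc : (inner ℝ (y - k) (z - p) : ℝ) = d^2 + 2*ε*d - (inner ℝ (y - k) (p - k) : ℝ) := by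
    have : z - p = (y - k) + (2*ε) • u - (p - k) := by rw [hz]; abel
    rw [this, inner_sub_right, inner_add_right, real_inner_smul_right, hu,
      real_inner_smul_right, real_inner_self_eq_norm_sq]
    field_simp
    ring
  have hCS : (inner ℝ (y - k) (z - p) : ℝ) ≤ d * ‖z - p‖ := real_inner_le_norm _ _
  have hzp : ‖z - p‖ < 2*ε := by rwa [← dist_eq_norm]
  nlinarith [sq_nonneg d]

lemma aux_frac {ρ d R : ℝ} (hρ : 0 < ρ) (hρd : ρ ≤ d) (hdR : d ≤ R) :
    (d^2-ρ^2)/(d^2+ρ^2) ≤ (R^2-ρ^2)/(R^2+ρ^2) := by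
  rw [div_le_div_iff₀ (by positivity) (by positivity)]
  have hsq : d^2 ≤ R^2 := by nlinarith
  nlinarith [mul_le_mul_of_nonneg_left hsq (sq_nonneg ρ)]

lemma aux_angle {K : Set (EuclideanSpace ℝ (Fin 2))} {z : EuclideanSpace ℝ (Fin 2)}
    {ρ R : ℝ} (hρ : 0 < ρ) (hρR : ρ ≤ R)
    (hball : closedBall z ρ ⊆ K) (hsub : K ⊆ closedBall z R)
    {v : EuclideanSpace ℝ (Fin 2)} (hv : v ∈ Set.extremePoints ℝ K) :
    Real.arccos ((R^2 - ρ^2)/(R^2 + ρ^2)) ≤ vertexAngle K v := by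
  have hvK : v ∈ K := hv.1
  set w : EuclideanSpace ℝ (Fin 2) := z - v with hw
  set d : ℝ := ‖w‖ with hd
  have hdR : d ≤ R := by
    have := hsub hvK
    rw [mem_closedBall, dist_eq_norm] at this
    rw [hd, hw, ← norm_neg]
    simpa [neg_sub] using this
  have hρd : ρ ≤ d := by
    by_contra hlt
    push_neg at hlt
    set e : EuclideanSpace ℝ (Fin 2) := EuclideanSpace.single 0 (1:ℝ) with he
    have hene : ‖e‖ = 1 := by simp [he]
    set c : EuclideanSpace ℝ (Fin 2) := (ρ - d) • e with hc
    have hcn : ‖c‖ = ρ - d := by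
      rw [hc, norm_smul, hene, mul_one, Real.norm_eq_abs, abs_of_pos (by linarith)]
    have ha : v + c ∈ K := by
      apply hball
      rw [mem_closedBall, dist_eq_norm]
      calc ‖v + c - z‖ = ‖c - w‖ := by rw [hw]; congr 1; abel
      _ ≤ ‖c‖ + ‖w‖ := norm_sub_le _ _
      _ ≤ ρ := by rw [hcn, ← hd]; linarith
    have hb : v - c ∈ K := by
      apply hball
      rw [mem_closedBall, dist_eq_norm]
      calc ‖v - c - z‖ = ‖-(c + w)‖ := by rw [hw]; congr 1; abel
      _ ≤ ‖c‖ + ‖w‖ := by rw [norm_neg]; exact norm_add_le _ _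
      _ ≤ ρ := by rw [hcn, ← hd]; linarith
    have hmem : v ∈ openSegment ℝ (v + c) (v - c) := by
      refine ⟨1/2, 1/2, by norm_num, by norm_num, by norm_num, ?_⟩
      module
    have h1 := hv.2 ha hb hmem
    have hcne : c ≠ 0 := by
      rw [hc, smul_ne_zero_iff]
      constructor
      · intro h0; rw [h0] at hcn; simp at hcn; linarith
      · intro h0; rw [h0, norm_zero] at hene; norm_num at hene
    exact hcne (by rwa [add_eq_left] at h1)
  clear_value w
  clear_value d
  have hd0 : 0 < d := lt_of_lt_of_le hρ hρd
  obtain ⟨u, hwu, hun⟩ : ∃ u : EuclideanSpace ℝ (Fin 2),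
      (inner ℝ w u : ℝ) = 0 ∧ ‖u‖ = 1 := by
    have hw2 : w 0 ^ 2 + w 1 ^ 2 = d ^ 2 := by
      have h := real_inner_self_eq_norm_sq w
      rw [PiLp.inner_apply] at h
      rw [hd]
      simpa [Fin.sum_univ_two, sq] using h
    refine ⟨d⁻¹ • (WithLp.equiv 2 (Fin 2 → ℝ)).symm ![-(w 1), w 0], ?_, ?_⟩
    · rw [real_inner_smul_right, PiLp.inner_apply]
      simp only [Fin.sum_univ_two, WithLp.equiv_symm_apply, PiLp.toLp_apply, RCLike.inner_apply,
        conj_trivial, Matrix.cons_val_zero, Matrix.cons_val_one, Matrix.head_cons]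
      ring
    · have h2 : (inner ℝ (d⁻¹ • (WithLp.equiv 2 (Fin 2 → ℝ)).symm ![-(w 1), w 0])
          (d⁻¹ • (WithLp.equiv 2 (Fin 2 → ℝ)).symm ![-(w 1), w 0]) : ℝ) = 1 := by
        rw [real_inner_smul_right, real_inner_smul_left, PiLp.inner_apply]
        simp only [Fin.sum_univ_two, WithLp.equiv_symm_apply, PiLp.toLp_apply, RCLike.inner_apply,
          conj_trivial, Matrix.cons_val_zero, Matrix.cons_val_one, Matrix.head_cons]
        field_simp
        nlinarith [hw2]
      have h3 := real_inner_self_eq_norm_sq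
        (d⁻¹ • (WithLp.equiv 2 (Fin 2 → ℝ)).symm ![-(w 1), w 0])
      rw [h2] at h3
      nlinarith [norm_nonneg (d⁻¹ • (WithLp.equiv 2 (Fin 2 → ℝ)).symm ![-(w 1), w 0])]
  have huw : (inner ℝ u w : ℝ) = 0 := by rw [real_inner_comm]; exact hwu
  set a := z + ρ • u with ha
  set b := z - ρ • u with hb
  have haK : a ∈ K := hball (by
    rw [mem_closedBall, dist_eq_norm, ha]
    simp [norm_smul, hun, abs_of_pos hρ])
  have hbK : b ∈ K := hball (by
    rw [mem_closedBall, dist_eq_norm, hb]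
    simp [norm_smul, hun, abs_of_pos hρ])
  have hav : a - v = w + ρ • u := by rw [ha, hw]; abel
  have hbv : b - v = w - ρ • u := by rw [hb, hw]; abel
  have hinner : (inner ℝ (a - v) (b - v) : ℝ) = d^2 - ρ^2 := by
    rw [hav, hbv]
    simp only [inner_sub_right, inner_add_left, real_inner_smul_left,
      real_inner_smul_right, real_inner_self_eq_norm_sq, hwu, huw, hun, ← hd]
    rw [norm_smul, hun, mul_one, Real.norm_eq_abs, abs_of_pos hρ]
    ring
  have hwρu : (inner ℝ w (ρ • u) : ℝ) = 0 := by rw [real_inner_smul_right, hwu]; ring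
  have hρun : ‖ρ • u‖ = ρ := by rw [norm_smul, hun, mul_one, Real.norm_eq_abs, abs_of_pos hρ]
  have hna : ‖a - v‖^2 = d^2 + ρ^2 := by
    rw [hav, norm_add_sq_real, hwρu, hρun, ← hd]; ring
  have hnb : ‖b - v‖^2 = d^2 + ρ^2 := by
    rw [hbv, norm_sub_sq_real, hwρu, hρun, ← hd]; ring
  have hna' : ‖a - v‖ = Real.sqrt (d^2 + ρ^2) := by
    rw [← hna, Real.sqrt_sq (norm_nonneg _)]
  have hnb' : ‖b - v‖ = Real.sqrt (d^2 + ρ^2) := by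
    rw [← hnb, Real.sqrt_sq (norm_nonneg _)]
  have hprod : ‖a - v‖ * ‖b - v‖ = d^2 + ρ^2 := by
    rw [hna', hnb', Real.mul_self_sqrt (by positivity)]
  have hanev : a ≠ v := by
    intro h0
    rw [h0, sub_self, norm_zero] at hna
    nlinarith
  have hbnev : b ≠ v := by
    intro h0
    rw [h0, sub_self, norm_zero] at hnb
    nlinarith
  have hangle : EuclideanGeometry.angle a v b = Real.arccos ((d^2-ρ^2)/(d^2+ρ^2)) := by
    rw [EuclideanGeometry.angle, InnerProductGeometry.angle]
    congr 1
    rw [vsub_eq_sub, vsub_eq_sub, hinner, hprod]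
  have hmono : Real.arccos ((R^2-ρ^2)/(R^2+ρ^2)) ≤ EuclideanGeometry.angle a v b := by
    rw [hangle, Real.arccos_eq_pi_div_two_sub_arcsin, Real.arccos_eq_pi_div_two_sub_arcsin]
    linarith [Real.monotone_arcsin (aux_frac hρ hρd hdR)]
  refine le_trans hmono (le_csSup ?_ ?_)
  · refine ⟨Real.pi, ?_⟩
    rintro θ ⟨a', _, b', _, _, _, rfl⟩
    exact EuclideanGeometry.angle_le_pi _ _ _
  · exact ⟨a, haK, b, hbK, hanev, hbnev, rfl⟩

lemma vertexAngle_nonneg (K : Set (EuclideanSpace ℝ (Fin 2))) (v : EuclideanSpace ℝ (Fin 2)) :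
    0 ≤ vertexAngle K v := by
  apply Real.sSup_nonneg
  rintro θ ⟨a, _, b, _, _, _, rfl⟩
  exact EuclideanGeometry.angle_nonneg _ _ _

lemma vertexAngle_le_pi (K : Set (EuclideanSpace ℝ (Fin 2))) (v : EuclideanSpace ℝ (Fin 2)) :
    vertexAngle K v ≤ Real.pi := by
  apply Real.sSup_le
  · rintro θ ⟨a, _, b, _, _, _, rfl⟩
    exact EuclideanGeometry.angle_le_pi _ _ _
  · exact Real.pi_pos.le

lemma minAngle_le_pi (K : Set (EuclideanSpace ℝ (Fin 2))) : minAngle K ≤ Real.pi := by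
  rw [minAngle]
  set S := {θ | ∃ v ∈ Set.extremePoints ℝ K, θ = vertexAngle K v} with hS
  rcases S.eq_empty_or_nonempty with h | ⟨θ, hθ⟩
  · rw [h, Real.sInf_empty]; exact Real.pi_pos.le
  · refine le_trans (csInf_le ⟨0, ?_⟩ hθ) ?_
    · rintro θ' ⟨v, _, rfl⟩; exact vertexAngle_nonneg _ _
    · obtain ⟨v, _, rfl⟩ := hθ; exact vertexAngle_le_pi _ _

lemma aux_minAngle {K : Set (EuclideanSpace ℝ (Fin 2))}
    (hKcomp : IsCompact K) (hKne : K.Nonempty)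
    {z : EuclideanSpace ℝ (Fin 2)} {ρ R : ℝ} (hρ : 0 < ρ) (hρR : ρ ≤ R)
    (hball : closedBall z ρ ⊆ K) (hsub : K ⊆ closedBall z R) :
    Real.arccos ((R^2 - ρ^2)/(R^2 + ρ^2)) ≤ minAngle K := by
  apply le_csInf
  · obtain ⟨v, hv⟩ := hKcomp.extremePoints_nonempty hKne
    exact ⟨vertexAngle K v, v, hv, rfl⟩
  · rintro θ ⟨v, hv, rfl⟩
    exact aux_angle hρ hρR hball hsub hv


theorem stmt13_aux (V : ℕ → Set (EuclideanSpace ℝ (Fin 2)))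
    (hVfin : ∀ n, (V n).Finite)
    (J : ℕ → Set (EuclideanSpace ℝ (Fin 2))) (hJ : ∀ n, J n = convexHull ℝ (V n))
    (hp : Tendsto (fun n => ((μH[1] (frontier (J n))).toReal : ℝ)) atTop atTop)
    (O : Set (EuclideanSpace ℝ (Fin 2)))
    (hOc : IsCompact O) (hOconv : Convex ℝ O) (hOint : (interior O).Nonempty)
    (hconv : Tendsto (fun n => hausdorffDist (((μH[1] (frontier (J n))).toReal)⁻¹ • J n) O) atTop (𝓝 0)) :
    0 < Filter.liminf (fun n => minAngle (J n)) atTop := by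
  classical
  obtain ⟨x, hx⟩ := hOint
  obtain ⟨t, ht, hxt⟩ := Metric.mem_nhds_iff.mp (mem_interior_iff_mem_nhds.mp hx)
  set r := t/2 with hr
  have hr0 : 0 < r := by positivity
  have hrO : closedBall x r ⊆ O := (closedBall_subset_ball (by rw [hr]; linarith)).trans hxt
  obtain ⟨R0, hR0⟩ := hOc.isBounded.subset_closedBall x
  have hR00 : 0 ≤ R0 := by
    have := hR0 (interior_subset hx)
    simpa using this
  set R := R0 + r with hR
  set c := Real.arccos ((R^2 - (r/2)^2)/(R^2 + (r/2)^2)) with hc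
  have hc0 : 0 < c := by
    rw [hc, Real.arccos_pos, div_lt_one (by positivity)]
    nlinarith
  have hev1 : ∀ᶠ n in atTop, 0 < (μH[1] (frontier (J n))).toReal := hp.eventually_gt_atTop 0
  have hev2 : ∀ᶠ n in atTop,
      hausdorffDist (((μH[1] (frontier (J n))).toReal)⁻¹ • J n) O < r/8 :=
    hconv.eventually (gt_mem_nhds (by positivity))
  have hev : ∀ᶠ n in atTop, c ≤ minAngle (J n) := by
    filter_upwards [hev1, hev2] with n hn1 hn2
    set p := (μH[1] (frontier (J n))).toReal with hpn
    have hp0 : p ≠ 0 := ne_of_gt hn1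
    have hJcomp : IsCompact (J n) := by
      rw [hJ n]; exact (hVfin n).isCompact_convexHull ℝ
    have hJconv : Convex ℝ (J n) := by rw [hJ n]; exact convex_convexHull ℝ _
    have hJne : (J n).Nonempty := by
      rcases (J n).eq_empty_or_nonempty with h | h
      · exfalso
        have h2 : (0:ℝ) < (μH[1] (frontier (J n))).toReal := hn1
        rw [h] at h2
        simp at h2
      · exact h
    set K := p⁻¹ • J n with hK
    have hKcomp : IsCompact K := by
      rw [hK, ← Set.image_smul]
      exact hJcomp.image (continuous_const_smul _)
    have hKconv : Convex ℝ K := hJconv.smul _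
    have hKne : K.Nonempty := hJne.smul_set
    have hOne : O.Nonempty := ⟨x, interior_subset hx⟩
    have hfin : hausdorffEDist K O ≠ ⊤ :=
      hausdorffEdist_ne_top_of_nonempty_of_bounded hKne hOne hKcomp.isBounded hOc.isBounded
    -- inner ball
    have hball2 : closedBall x (r/2) ⊆ K := by
      have h1 : closedBall x (r - 2*(r/8)) ⊆ K := by
        apply aux_ball_subset hKconv hKcomp.isClosed hKne (by positivity)
        intro y hy
        have hyO : y ∈ O := hrO hy
        have := infDist_le_hausdorffDist_of_mem hyO (by rwa [hausdorffEDist_comm] at hfin)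
        rw [hausdorffDist_comm] at this
        linarith
      exact (closedBall_subset_closedBall (by linarith)).trans h1
    -- outer ball
    have hsub2 : K ⊆ closedBall x R := by
      intro y hy
      have h1 : infDist y O ≤ hausdorffDist K O := infDist_le_hausdorffDist_of_mem hy hfin
      have h2 : infDist y O < r/4 := by linarith
      obtain ⟨o, hoO, ho⟩ := (infDist_lt_iff hOne).mp h2
      have h3 : dist o x ≤ R0 := hR0 hoO
      rw [mem_closedBall]
      calc dist y x ≤ dist y o + dist o x := dist_triangle _ _ _
      _ ≤ R := by rw [hR]; linarith
    -- transfer to J n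
    have hJK : J n = p • K := by rw [hK, smul_inv_smul₀ hp0]
    have hball3 : closedBall (p • x) (p * (r/2)) ⊆ J n := by
      rw [hJK]
      have := Set.smul_set_mono (a := p) hball2
      rwa [smul_closedBall' hp0, Real.norm_eq_abs, abs_of_pos hn1] at this
    have hsub3 : J n ⊆ closedBall (p • x) (p * R) := by
      rw [hJK]
      have := Set.smul_set_mono (a := p) hsub2
      rwa [smul_closedBall' hp0, Real.norm_eq_abs, abs_of_pos hn1] at this
    have hmain := aux_minAngle hJcomp hJne (by positivity : (0:ℝ) < p * (r/2))
      (by nlinarith : p * (r/2) ≤ p * R) hball3 hsub3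
    have heq : ((p*R)^2 - (p*(r/2))^2)/((p*R)^2 + (p*(r/2))^2)
        = (R^2 - (r/2)^2)/(R^2 + (r/2)^2) := by
      rw [mul_pow, mul_pow, ← mul_sub, ← mul_add, mul_div_mul_left]
      positivity
    rw [heq] at hmain
    exact hmain
  have hcob : IsCoboundedUnder (· ≥ ·) atTop (fun n => minAngle (J n)) := by
    apply Filter.IsBoundedUnder.isCoboundedUnder_ge
    exact Filter.isBoundedUnder_of ⟨Real.pi, fun n => minAngle_le_pi (J n)⟩
  calc (0:ℝ) < c := hc0
  _ ≤ Filter.liminf (fun n => minAngle (J n)) atTop := Filter.le_liminf_of_le hcob hev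

theorem stmt13 (V : ℕ → Set (EuclideanSpace ℝ (Fin 2)))
    (hVfin : ∀ n, (V n).Finite) (hVlat : ∀ n, ∀ v ∈ V n, IsLatticePt v)
    (J : ℕ → Set (EuclideanSpace ℝ (Fin 2))) (hJ : ∀ n, J n = convexHull ℝ (V n))
    (hp : Tendsto (fun n => per (J n)) atTop atTop)
    (O : Set (EuclideanSpace ℝ (Fin 2)))
    (hOc : IsCompact O) (hOconv : Convex ℝ O) (hOint : (interior O).Nonempty)
    (hconv : Tendsto (fun n => hausdorffDist ((per (J n))⁻¹ • J n) O) atTop (𝓝 0)) :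
    0 < Filter.liminf (fun n => minAngle (J n)) atTop := by
  exact stmt13_aux V hVfin J hJ hp O hOc hOconv hOint hconv
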